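/- There exists a constant K such that for every natural number k ≥ K and every b dividing k with 2 ≤ b ≤ k/2, one has ln(k!) − ln(b!) − b·ln((k/b)!) ≥ (k·ln b)/3; equivalently, the index k! / ( b! · ((k/b)!)^b ) is at least b^(k/3). -/

import Mathlib

lemma log_factorial_lb (n : ℕ) (hn : 1 ≤ n) :
    (n : ℝ) * Real.log n - n ≤ Real.log (Nat.factorial n) := by
  induction n, hn using Nat.le_induction with
  | base => simp
  | succ m hm ih =>
    have hm0 : (0 : ℝ) < (m : ℝ) := by exact_mod_cast hm
    have hfm : (0 : ℝ) < (Nat.factorial m : ℝ) := by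
      exact_mod_cast Nat.factorial_pos m
    have hlog : Real.log (((m : ℝ) + 1) / m) ≤ ((m : ℝ) + 1) / m - 1 :=
      Real.log_le_sub_one_of_pos (by positivity)
    have hdiv : Real.log (((m : ℝ) + 1) / m)
        = Real.log ((m : ℝ) + 1) - Real.log m :=
      Real.log_div (by positivity) (ne_of_gt hm0)
    have key : (m : ℝ) * (Real.log ((m : ℝ) + 1) - Real.log m) ≤ 1 := by
      rw [hdiv] at hlog
      have h2 := mul_le_mul_of_nonneg_left hlog hm0.le
      have h3 : (m : ℝ) * (((m : ℝ) + 1) / m - 1) = 1 := by field_simp; ring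
      linarith [h2, h3.le, h3.ge]
    have hfact : Real.log ((Nat.factorial (m + 1) : ℝ))
        = Real.log ((m : ℝ) + 1) + Real.log (Nat.factorial m) := by
      rw [Nat.factorial_succ]
      push_cast
      rw [Real.log_mul (by positivity) (ne_of_gt hfm)]
    push_cast
    rw [hfact]
    nlinarith [key, ih]

lemma log_factorial_ub (n : ℕ) (hn : 1 ≤ n) :
    Real.log (Nat.factorial n) ≤ (n : ℝ) * Real.log n - n + Real.log n + 1 := by
  induction n, hn using Nat.le_induction with
  | base => simp
  | succ m hm ih =>
    have hm0 : (0 : ℝ) < (m : ℝ) := by exact_mod_cast hm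
    have hfm : (0 : ℝ) < (Nat.factorial m : ℝ) := by
      exact_mod_cast Nat.factorial_pos m
    have hlog : Real.log ((m : ℝ) / ((m : ℝ) + 1)) ≤ (m : ℝ) / ((m : ℝ) + 1) - 1 :=
      Real.log_le_sub_one_of_pos (by positivity)
    have hdiv : Real.log ((m : ℝ) / ((m : ℝ) + 1))
        = Real.log m - Real.log ((m : ℝ) + 1) :=
      Real.log_div (ne_of_gt hm0) (by positivity)
    have key : 1 ≤ ((m : ℝ) + 1) * (Real.log ((m : ℝ) + 1) - Real.log m) := by
      rw [hdiv] at hlog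
      have h2 := mul_le_mul_of_nonneg_left hlog (by positivity : (0:ℝ) ≤ (m:ℝ)+1)
      have h3 : ((m : ℝ) + 1) * ((m : ℝ) / ((m : ℝ) + 1) - 1) = -1 := by field_simp; ring
      nlinarith [h2, h3]
    have hfact : Real.log ((Nat.factorial (m + 1) : ℝ))
        = Real.log ((m : ℝ) + 1) + Real.log (Nat.factorial m) := by
      rw [Nat.factorial_succ]
      push_cast
      rw [Real.log_mul (by positivity) (ne_of_gt hfm)]
    push_cast
    rw [hfact]
    nlinarith [key, ih]

lemma G_key (A B : ℝ) (hA : 2 ≤ A) (hB : 2 ≤ B)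
    (hcase : 9 ≤ A ∨ (A ≤ 8 ∧ 250000 ≤ B)) :
    B * Real.log A + B * Real.log B + Real.log B + 1
      ≤ 2 / 3 * (A * B) * Real.log B := by
  have hA0 : (0:ℝ) < A := by linarith
  have hB0 : (0:ℝ) < B := by linarith
  have hlB : Real.log 2 ≤ Real.log B := Real.log_le_log (by norm_num) hB
  have hl2 : (0.6931471803 : ℝ) < Real.log 2 := Real.log_two_gt_d9
  have hl2' : Real.log 2 < (0.6931471808 : ℝ) := Real.log_two_lt_d9
  have hL0 : (0:ℝ) < Real.log B := by linarith
  rcases hcase with h9 | ⟨hA8, hBbig⟩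
  · -- A ≥ 9
    have hA16 : Real.log A ≤ A / 16 + 4 * Real.log 2 - 1 := by
      have h := Real.log_le_sub_one_of_pos (show (0:ℝ) < A / 16 by linarith)
      rw [Real.log_div (ne_of_gt hA0) (by norm_num)] at h
      have h16 : Real.log 16 = 4 * Real.log 2 := by
        rw [show (16:ℝ) = 2 ^ 4 by norm_num, Real.log_pow]
        push_cast; ring
      rw [h16] at h
      linarith
    have hinner : 0 ≤ 2 / 3 * A * Real.log B - Real.log A - 3 / 2 * Real.log B - 1 / 2 := by
      have hF2 : 0 ≤ (2 / 3 * A - 3 / 2) * (Real.log B - Real.log 2) :=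
        mul_nonneg (by linarith) (by linarith)
      nlinarith [hF2, hA16]
    have hBinner : 0 ≤ B * (2 / 3 * A * Real.log B - Real.log A - 3 / 2 * Real.log B - 1 / 2) :=
      mul_nonneg hB0.le hinner
    have hF1 : 0 ≤ (B / 2 - 1) * (Real.log B + 1) :=
      mul_nonneg (by linarith) (by linarith)
    nlinarith [hBinner, hF1]
  · -- 2 ≤ A ≤ 8, B ≥ 250000
    have h12 : (12 : ℝ) ≤ Real.log B := by
      rw [Real.le_log_iff_exp_le hB0]
      have e1 : Real.exp 12 = Real.exp 1 ^ 12 := by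
        rw [← Real.exp_nat_mul]; norm_num
      have e2 : Real.exp 1 ^ 12 ≤ (2.7182818286 : ℝ) ^ 12 :=
        pow_le_pow_left₀ (Real.exp_pos 1).le Real.exp_one_lt_d9.le 12
      have e3 : (2.7182818286 : ℝ) ^ 12 ≤ 250000 := by norm_num
      linarith [e1.le, e1.ge]
    have hMA : Real.log A ≤ 3 * Real.log 2 := by
      have : Real.log A ≤ Real.log 8 := Real.log_le_log hA0 (by linarith)
      have h8 : Real.log 8 = 3 * Real.log 2 := by
        rw [show (8:ℝ) = 2 ^ 3 by norm_num, Real.log_pow]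
        push_cast; ring
      linarith [h8 ▸ this]
    have h1 : 0 ≤ B * ((2 / 3 * A - 4 / 3) * Real.log B) :=
      mul_nonneg hB0.le (mul_nonneg (by linarith) hL0.le)
    have h2 : 0 ≤ B * (3 * Real.log 2 - Real.log A) :=
      mul_nonneg hB0.le (by linarith)
    have h3 : 0 ≤ B * (Real.log B - 12) :=
      mul_nonneg hB0.le (by linarith)
    have h4 : Real.log B + 1 ≤ B := by
      linarith [Real.log_le_sub_one_of_pos hB0]
    nlinarith [h1, h2, h3, h4]

theorem index_of_maximal_imprimitive_subgroup :
    ∃ K : ℕ, ∀ (k : ℕ), K ≤ k → ∀ b : ℕ, b ∣ k → 2 ≤ b → 2 * b ≤ k →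
      (Real.log (Nat.factorial k) - Real.log (Nat.factorial b)
          - (b : ℝ) * Real.log (Nat.factorial (k / b)) ≥ (k : ℝ) * Real.log b / 3) ∧
      ((Nat.factorial k : ℝ) /
          ((Nat.factorial b : ℝ) * (Nat.factorial (k / b) : ℝ) ^ b) ≥
        (b : ℝ) ^ ((k : ℝ) / 3)) := by
  refine ⟨2000000, fun k hk b hdvd hb2 hbk => ?_⟩
  set a := k / b with ha_def
  have hab : b * a = k := Nat.mul_div_cancel' hdvd
  have ha2 : 2 ≤ a := by
    by_contra h
    push_neg at h
    have ha1 : a ≤ 1 := by omega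
    have : b * a ≤ b * 1 := Nat.mul_le_mul_left b ha1
    omega
  have hk1 : 1 ≤ k := by omega
  have hb1 : 1 ≤ b := by omega
  have ha1 : 1 ≤ a := by omega
  -- real casts
  have hA : (2:ℝ) ≤ (a:ℝ) := by exact_mod_cast ha2
  have hB : (2:ℝ) ≤ (b:ℝ) := by exact_mod_cast hb2
  have hA0 : (0:ℝ) < (a:ℝ) := by linarith
  have hB0 : (0:ℝ) < (b:ℝ) := by linarith
  have hABk : (k:ℝ) = (b:ℝ) * (a:ℝ) := by exact_mod_cast hab.symm
  have hlogk : Real.log k = Real.log b + Real.log a := by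
    rw [hABk, Real.log_mul (ne_of_gt hB0) (ne_of_gt hA0)]
  -- Stirling bounds
  have hfk := log_factorial_lb k hk1
  have hfb := log_factorial_ub b hb1
  have hfa := log_factorial_ub a ha1
  have hfa' : (b:ℝ) * Real.log (Nat.factorial a)
      ≤ (b:ℝ) * ((a:ℝ) * Real.log a - a + Real.log a + 1) :=
    mul_le_mul_of_nonneg_left hfa hB0.le
  -- the key inequality
  have hcase : 9 ≤ (a:ℝ) ∨ ((a:ℝ) ≤ 8 ∧ 250000 ≤ (b:ℝ)) := by
    rcases le_or_gt 9 a with h | h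
    · left; exact_mod_cast h
    · right
      have ha8 : a ≤ 8 := by omega
      have hbig : 2000000 ≤ b * a := by omega
      have : b * a ≤ b * 8 := Nat.mul_le_mul_left b ha8
      have hb250 : 250000 ≤ b := by omega
      exact ⟨by exact_mod_cast ha8, by exact_mod_cast hb250⟩
  have hG := G_key (a:ℝ) (b:ℝ) hA hB hcase
  have e1 : (k:ℝ) * Real.log k = (b:ℝ) * (a:ℝ) * (Real.log b + Real.log a) := by
    rw [hlogk, hABk]
  have main : Real.log (Nat.factorial k) - Real.log (Nat.factorial b)
      - (b : ℝ) * Real.log (Nat.factorial a) ≥ (k : ℝ) * Real.log b / 3 := by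
    have hrw : ((k:ℝ)) * Real.log b / 3 = (b:ℝ) * (a:ℝ) * Real.log b / 3 := by
      rw [hABk]
    rw [hrw]
    nlinarith [hfk, hfb, hfa', hG, e1, hABk]
  refine ⟨main, ?_⟩
  -- second conjunct
  have hfk0 : (0:ℝ) < (Nat.factorial k : ℝ) := by exact_mod_cast Nat.factorial_pos k
  have hfb0 : (0:ℝ) < (Nat.factorial b : ℝ) := by exact_mod_cast Nat.factorial_pos b
  have hfa0 : (0:ℝ) < (Nat.factorial a : ℝ) := by exact_mod_cast Nat.factorial_pos a
  have hidxpos : (0:ℝ) < (Nat.factorial k : ℝ)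
      / ((Nat.factorial b : ℝ) * (Nat.factorial a : ℝ) ^ b) := by positivity
  have hlogidx : Real.log ((Nat.factorial k : ℝ)
      / ((Nat.factorial b : ℝ) * (Nat.factorial a : ℝ) ^ b))
      = Real.log (Nat.factorial k) - Real.log (Nat.factorial b)
        - (b : ℝ) * Real.log (Nat.factorial a) := by
    rw [Real.log_div (ne_of_gt hfk0) (by positivity),
        Real.log_mul (ne_of_gt hfb0) (by positivity), Real.log_pow]
    ring
  rw [ge_iff_le, Real.rpow_def_of_pos hB0]
  calc Real.exp (Real.log b * ((k:ℝ) / 3))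
      ≤ Real.exp (Real.log ((Nat.factorial k : ℝ)
          / ((Nat.factorial b : ℝ) * (Nat.factorial a : ℝ) ^ b))) := by
        apply Real.exp_le_exp.mpr
        rw [hlogidx]
        nlinarith [main]
    _ = _ := Real.exp_log hidxpos
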